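/- Fix constants c > b > 0. For every N ≥ max{2^{1/b}, 2^{8/(c−b)}}, the binary Kullback–Leibler divergence satisfies D(N^{−b} ‖ N^{−c}) ≥ ((c−b)/2) · N^{−b} · log₂ N, where D(a‖p) = a·log₂(a/p) + (1−a)·log₂((1−a)/(1−p)). -/

import Mathlib

theorem stmt_5 (b c : ℝ) (hb : 0 < b) (hbc : b < c) (N : ℝ)
    (hN : N ≥ max ((2:ℝ) ^ (1/b)) ((2:ℝ) ^ (8/(c-b)))) :
    N ^ (-b) * Real.logb 2 (N ^ (-b) / N ^ (-c))
      + (1 - N ^ (-b)) * Real.logb 2 ((1 - N ^ (-b)) / (1 - N ^ (-c)))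
      ≥ ((c - b)/2) * N ^ (-b) * Real.logb 2 N := by
  have hcb : 0 < c - b := by linarith
  have h2 : (1:ℝ) < 2 := one_lt_two
  have hN1 : (2:ℝ) ^ (1/b) ≤ N := le_trans (le_max_left _ _) hN
  have hN2 : (2:ℝ) ^ (8/(c-b)) ≤ N := le_trans (le_max_right _ _) hN
  have hNgt1 : (1:ℝ) < N := by
    refine lt_of_lt_of_le ?_ hN1
    exact Real.one_lt_rpow_iff_of_pos two_pos |>.2 (Or.inl ⟨h2, by positivity⟩)
  have hNpos : (0:ℝ) < N := by linarith
  set a := N ^ (-b) with ha_def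
  set p := N ^ (-c) with hp_def
  set L := Real.logb 2 N with hL_def
  have ha_pos : 0 < a := Real.rpow_pos_of_pos hNpos _
  have hp_pos : 0 < p := Real.rpow_pos_of_pos hNpos _
  have hp_lt_a : p < a := by
    exact (Real.rpow_lt_rpow_left_iff hNgt1).2 (by linarith)
  have ha_half : a ≤ 1/2 := by
    have hNb : (2:ℝ) ≤ N ^ b := by
      have := Real.rpow_le_rpow (by positivity) hN1 hb.le
      rwa [← Real.rpow_mul (by norm_num : (0:ℝ) ≤ 2),
        one_div, inv_mul_cancel₀ hb.ne', Real.rpow_one] at this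
    have : a = (N ^ b)⁻¹ := by rw [ha_def, Real.rpow_neg hNpos.le]
    rw [this]
    rw [inv_le_comm₀ (by positivity) (by norm_num)]
    linarith
  have ha_lt1 : a < 1 := by linarith
  have hp_lt1 : p < 1 := by linarith
  have hlog2pos : 0 < Real.log 2 := Real.log_pos h2
  -- L ≥ 8/(c-b)
  have hLge : 8/(c-b) ≤ L := by
    have := Real.logb_le_logb_of_le (b := 2) one_lt_two (Real.rpow_pos_of_pos two_pos _) hN2
    rwa [Real.logb_rpow (by norm_num) (by norm_num)] at this
  have hLpos : 0 < L := lt_of_lt_of_le (by positivity) hLge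
  -- first term
  have hfirst : Real.logb 2 (a / p) = (c - b) * L := by
    have hdiv : a / p = N ^ (c - b) := by
      rw [ha_def, hp_def, ← Real.rpow_sub hNpos]
      ring_nf
    rw [hdiv, hL_def, Real.logb, Real.logb, Real.log_rpow hNpos]
    ring
  -- second term lower bound
  have hlog1a : -(2*a) ≤ Real.log (1 - a) := by
    have h1a : 0 < 1 - a := by linarith
    have hx : Real.log ((1 - a)⁻¹) ≤ (1 - a)⁻¹ - 1 :=
      Real.log_le_sub_one_of_pos (by positivity)
    rw [Real.log_inv] at hx
    have h1 : (1 - a)⁻¹ - 1 = a / (1 - a) := by field_simp; ring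
    have h2' : a / (1 - a) ≤ 2 * a := by
      rw [div_le_iff₀ h1a]; nlinarith
    linarith
  have hlogb_ge : -(3*a) ≤ Real.logb 2 ((1 - a) / (1 - p)) := by
    have h1a : 0 < 1 - a := by linarith
    have h1p : 0 < 1 - p := by linarith
    have hlp : Real.log (1 - p) < 0 := Real.log_neg h1p (by linarith)
    have h1 : Real.logb 2 ((1 - a) / (1 - p))
        = (Real.log (1 - a) - Real.log (1 - p)) / Real.log 2 := by
      rw [Real.logb, Real.log_div h1a.ne' h1p.ne']
    rw [h1]
    have hlog2 : (0.6931471803:ℝ) < Real.log 2 := Real.log_two_gt_d9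
    rw [le_div_iff₀ hlog2pos]
    nlinarith [hlog1a, ha_pos]
  have hsecond : -(3*a) ≤ (1 - a) * Real.logb 2 ((1 - a) / (1 - p)) := by
    set X := Real.logb 2 ((1 - a) / (1 - p))
    rcases le_or_gt 0 X with hX | hX
    · nlinarith
    · nlinarith
  rw [hfirst]
  have h8 : (8:ℝ) ≤ (c - b) * L := by
    rw [div_le_iff₀ hcb] at hLge; linarith
  nlinarith [mul_le_mul_of_nonneg_left h8 ha_pos.le]
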